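/- If P = [x_1,...,x_m] is a pointer list and i, j are distinct indices of the same parity, then x_i ≠ x_j. -/
import Mathlib


/-- A finite sequence of integers (0-indexed list) is a *pointer list*:
(1) even positive length; (2) unique index of minimum absolute value;
(3) unique index of maximum absolute value; (4) each intermediate absolute
value occurs at exactly one other index; (5) for each even (0-based) index i,
x i ≤ x (i+1) and x i * x (i+1) > 0; (6) for each even (0-based) index i no
entry has absolute value strictly between |x i| and |x (i+1)|. -/
def IsPointerList (P : List ℤ) : Prop :=
  P.length % 2 = 0 ∧ 0 < P.length ∧
  (∃! i, i < P.length ∧ ∀ j < P.length, |P.getD i 0| ≤ |P.getD j 0|) ∧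
  (∃! i, i < P.length ∧ ∀ j < P.length, |P.getD j 0| ≤ |P.getD i 0|) ∧
  (∀ i < P.length, (∃ j < P.length, |P.getD j 0| < |P.getD i 0|) →
      (∃ j < P.length, |P.getD i 0| < |P.getD j 0|) →
      ∃! j, j < P.length ∧ j ≠ i ∧ |P.getD j 0| = |P.getD i 0|) ∧
  (∀ i, i % 2 = 0 → i + 1 < P.length →
      P.getD i 0 ≤ P.getD (i+1) 0 ∧ 0 < P.getD i 0 * P.getD (i+1) 0) ∧
  (∀ i, i % 2 = 0 → i + 1 < P.length →
      ¬ ∃ j < P.length,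
        (|P.getD i 0| < |P.getD j 0| ∧ |P.getD j 0| < |P.getD (i+1) 0|) ∨
        (|P.getD (i+1) 0| < |P.getD j 0| ∧ |P.getD j 0| < |P.getD i 0|))

-- Context directed excision: delete the first adjacent equal pair, if any.
open Classical in
noncomputable def cde (P : List ℤ) : List ℤ :=
  if h : ∃ i, i + 1 < P.length ∧ P.getD i 0 = P.getD (i+1) 0 then
    P.take (Nat.find h) ++ P.drop (Nat.find h + 2)
  else P

-- Context directed reversal: for the minimal i admitting j > i with
-- x i = -(x j) (and the minimal such j), reverse and negate the segment
-- from position i+1 through j.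
open Classical in
noncomputable def cdr (P : List ℤ) : List ℤ :=
  if h : ∃ i, ∃ j, i < j ∧ j < P.length ∧ P.getD i 0 = -(P.getD j 0) then
    let i := Nat.find h
    let j := Nat.find (Nat.find_spec h)
    P.take (i+1) ++ (((P.drop (i+1)).take (j - i)).reverse.map (fun z => -z)) ++
      P.drop (j+1)
  else P

-- Context directed block swap: for the lexicographically least (i, j)
-- admitting k, ℓ with i < j < k < ℓ, x i = x k, x j = x ℓ, interchange
-- the blocks x_{i+1}..x_{j-1} and x_k..x_ℓ.
open Classical in
noncomputable def cds (P : List ℤ) : List ℤ :=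
  if h : ∃ i, ∃ j, ∃ k, ∃ l, i < j ∧ j < k ∧ k < l ∧ l < P.length ∧
      P.getD i 0 = P.getD k 0 ∧ P.getD j 0 = P.getD l 0 then
    let i := Nat.find h
    let j := Nat.find (Nat.find_spec h)
    let k := Nat.find (Nat.find_spec (Nat.find_spec h))
    let l := Nat.find (Nat.find_spec (Nat.find_spec (Nat.find_spec h)))
    P.take (i+1) ++ ((P.drop k).take (l - k + 1)) ++ ((P.drop j).take (k - j)) ++
      ((P.drop (i+1)).take (j - i - 1)) ++ P.drop (l+1)
  else P

/-- The doubling map π: each entry z is replaced by (z, z+1) if z > 0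
and by (z-1, z) if z < 0. -/
def piMap (M : List ℤ) : List ℤ :=
  M.flatMap (fun z => if 0 < z then [z, z + 1] else [z - 1, z])

/-- One step of the HNS algorithm: apply cde if applicable, else cds if
applicable, else cdr. -/
noncomputable def hnsStep (P : List ℤ) : List ℤ :=
  if cde P ≠ P then cde P else if cds P ≠ P then cds P else cdr P

/-- distinct indices of the same parity carry distinct entries. -/
lemma my_even_card_of_fpf (s : Finset ℕ) (σ : ℕ → ℕ)
    (h1 : ∀ k ∈ s, σ k ∈ s) (h2 : ∀ k ∈ s, σ (σ k) = k)
    (h3 : ∀ k ∈ s, σ k ≠ k) : Even s.card := by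
  classical
  induction s using Finset.strongInduction with
  | _ s ih =>
    rcases s.eq_empty_or_nonempty with rfl | ⟨k, hk⟩
    · simp
    · have hσk : σ k ∈ s := h1 k hk
      have hne : σ k ≠ k := h3 k hk
      set s' := (s.erase k).erase (σ k) with hs'
      have hmem : ∀ x, x ∈ s' ↔ x ∈ s ∧ x ≠ k ∧ x ≠ σ k := by
        intro x
        simp only [hs', Finset.mem_erase]
        tauto
      have hsub : s' ⊂ s := by
        refine Finset.ssubset_iff_of_subset ?_ |>.2 ⟨k, hk, ?_⟩
        · intro x hx; exact ((hmem x).1 hx).1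
        · intro hx; exact ((hmem k).1 hx).2.1 rfl
      have hE : Even s'.card := by
        refine ih s' hsub ?_ ?_ ?_
        · intro x hx
          obtain ⟨hxs, hxk, hxσ⟩ := (hmem x).1 hx
          refine (hmem (σ x)).2 ⟨h1 x hxs, ?_, ?_⟩
          · intro h; apply hxσ; rw [← h2 x hxs, h]
          · intro h
            apply hxk
            have := congrArg σ h
            rwa [h2 x hxs, h2 k hk] at this
        · intro x hx; exact h2 x ((hmem x).1 hx).1
        · intro x hx; exact h3 x ((hmem x).1 hx).1
      have hcard : s.card = s'.card + 2 := by
        have h1' : σ k ∈ s.erase k := Finset.mem_erase.2 ⟨hne, hσk⟩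
        have e1 : s'.card = (s.erase k).card - 1 := Finset.card_erase_of_mem h1'
        have e2 : (s.erase k).card = s.card - 1 := Finset.card_erase_of_mem hk
        have : 1 ≤ (s.erase k).card := Finset.card_pos.2 ⟨σ k, h1'⟩
        have : 1 ≤ s.card := Finset.card_pos.2 ⟨k, hk⟩
        omega
      rw [hcard]
      exact hE.add even_two

lemma my_keyA (m : ℕ) (f : ℕ → ℤ) (w : ℤ)
    (hm : m % 2 = 0)
    (hmax : ∃! i, i < m ∧ ∀ j < m, f j ≤ f i)
    (h4 : ∀ i < m, (∃ j < m, f j < f i) → (∃ j < m, f i < f j) →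
        ∃! j, j < m ∧ j ≠ i ∧ f j = f i)
    (hlow : ∃ q, q < m ∧ f q ≤ w)
    (hhigh : ∃ k, k < m ∧ w < f k)
    (hcl : ∀ p, p % 2 = 0 → p + 1 < m → (w < f p ↔ w < f (p+1))) :
    False := by
  classical
  set T := (Finset.range m).filter (fun k => w < f k) with hT
  have hmemT : ∀ k, k ∈ T ↔ k < m ∧ w < f k := by
    intro k; simp [hT]
  have heven : Even T.card := by
    apply my_even_card_of_fpf T (fun k => if k % 2 = 0 then k + 1 else k - 1)
    · intro k hk
      obtain ⟨hkm, hkw⟩ := (hmemT k).1 hk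
      by_cases h : k % 2 = 0
      · have hk1 : k + 1 < m := by omega
        simp only [if_pos h]
        exact (hmemT _).2 ⟨hk1, (hcl k h hk1).1 hkw⟩
      · have hp : (k-1) % 2 = 0 := by omega
        have hk1 : (k-1) + 1 < m := by omega
        have hkk : k - 1 + 1 = k := by omega
        simp only [if_neg h]
        refine (hmemT _).2 ⟨by omega, (hcl (k-1) hp hk1).2 ?_⟩
        rwa [hkk]
    · intro k hk
      by_cases h : k % 2 = 0
      · simp only [if_pos h]
        have : (k+1) % 2 ≠ 0 := by omega
        simp only [if_neg this]
        omega
      · obtain ⟨hkm, _⟩ := (hmemT k).1 hk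
        simp only [if_neg h]
        have h1 : (k-1) % 2 = 0 := by omega
        simp only [if_pos h1]
        omega
    · intro k hk
      obtain ⟨hkm, _⟩ := (hmemT k).1 hk
      by_cases h : k % 2 = 0
      · simp only [if_pos h]; omega
      · simp only [if_neg h]; omega
  obtain ⟨M, ⟨hMm, hMmax⟩, hMuniq⟩ := hmax
  have hMT : M ∈ T := by
    obtain ⟨k, hkm, hkw⟩ := hhigh
    exact (hmemT M).2 ⟨hMm, lt_of_lt_of_le hkw (hMmax k hkm)⟩
  set U := T.erase M with hU
  have hpart : ∀ k ∈ U, ∃! j, j < m ∧ j ≠ k ∧ f j = f k := by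
    intro k hk
    have hkT := Finset.mem_of_mem_erase hk
    have hkM : k ≠ M := Finset.ne_of_mem_erase hk
    obtain ⟨hkm, hkw⟩ := (hmemT k).1 hkT
    obtain ⟨q, hqm, hqw⟩ := hlow
    have hlt : f k < f M := by
      rcases lt_or_eq_of_le (hMmax k hkm) with h | h
      · exact h
      · exact absurd (hMuniq k ⟨hkm, fun j hj => h ▸ hMmax j hj⟩) hkM
    exact h4 k hkm ⟨q, hqm, lt_of_le_of_lt hqw hkw⟩ ⟨M, hMm, hlt⟩
  have hUeven : Even U.card := by
    set σ : ℕ → ℕ := fun k =>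
      if h : ∃! j, j < m ∧ j ≠ k ∧ f j = f k then h.choose else k with hσ
    have hσspec : ∀ k ∈ U, (σ k < m ∧ σ k ≠ k ∧ f (σ k) = f k) ∧
        ∀ y, (y < m ∧ y ≠ k ∧ f y = f k) → y = σ k := by
      intro k hk
      have h := hpart k hk
      simp only [hσ, dif_pos h]
      exact h.choose_spec
    have hmemσ : ∀ k ∈ U, σ k ∈ U := by
      intro k hk
      obtain ⟨⟨h1, h2, h3⟩, _⟩ := hσspec k hk
      have hkT := Finset.mem_of_mem_erase hk
      have hkM : k ≠ M := Finset.ne_of_mem_erase hk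
      obtain ⟨hkm, hkw⟩ := (hmemT k).1 hkT
      refine Finset.mem_erase.2 ⟨?_, (hmemT _).2 ⟨h1, h3 ▸ hkw⟩⟩
      intro hMe
      -- σ k = M, but f (σ k) = f k < f M
      have hlt : f k < f M := by
        rcases lt_or_eq_of_le (hMmax k hkm) with h | h
        · exact h
        · exact absurd (hMuniq k ⟨hkm, fun j hj => h ▸ hMmax j hj⟩) hkM
      rw [← hMe, h3] at hlt
      exact lt_irrefl _ hlt
    apply my_even_card_of_fpf U σ hmemσ
    · intro k hk
      have hσk := hmemσ k hk
      obtain ⟨⟨h1, h2, h3⟩, _⟩ := hσspec k hk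
      obtain ⟨_, huniq⟩ := hσspec (σ k) hσk
      have hkT := Finset.mem_of_mem_erase hk
      obtain ⟨hkm, _⟩ := (hmemT k).1 hkT
      exact (huniq k ⟨hkm, fun h => h2 h.symm, h3.symm⟩).symm
    · intro k hk
      exact (hσspec k hk).1.2.1
  have hodd : ¬ Even T.card := by
    have : T.card = U.card + 1 := by
      have he : U.card = T.card - 1 := by
        rw [hU]; exact Finset.card_erase_of_mem hMT
      have hpos : 1 ≤ T.card := Finset.card_pos.2 ⟨M, hMT⟩
      omega
    rw [this, Nat.even_add_one]
    exact fun h => h hUeven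
  exact hodd heven

lemma my_key2 (m : ℕ) (f : ℕ → ℤ) (w : ℤ) (a b : ℕ)
    (hm : m % 2 = 0)
    (hmax : ∃! i, i < m ∧ ∀ j < m, f j ≤ f i)
    (h4 : ∀ i < m, (∃ j < m, f j < f i) → (∃ j < m, f i < f j) →
        ∃! j, j < m ∧ j ≠ i ∧ f j = f i)
    (h6 : ∀ p, p % 2 = 0 → p + 1 < m →
        ¬ ∃ k < m, (f p < f k ∧ f k < f (p+1)) ∨ (f (p+1) < f k ∧ f k < f p))
    (ham : a < m) (hbm : b < m) (hab : a ≠ b)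
    (hfa : f a = w) (hfb : f b = w)
    (hma : f (if a % 2 = 0 then a + 1 else a - 1) < w)
    (hmb : f (if b % 2 = 0 then b + 1 else b - 1) < w) : False := by
  have hmam : (if a % 2 = 0 then a + 1 else a - 1) < m := by
    split <;> omega
  by_cases hhigh : ∃ k, k < m ∧ w < f k
  · -- occupants of level w are exactly a and b
    have hocc : ∀ k, k < m → f k = w → k = a ∨ k = b := by
      intro k hkm hkw
      by_cases hka : k = a
      · exact Or.inl hka
      · right
        obtain ⟨k', hk'm, hk'w⟩ := hhigh
        obtain ⟨c, _, hcu⟩ := h4 a ham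
          ⟨_, hmam, by rw [hfa]; exact hma⟩
          ⟨k', hk'm, by rw [hfa]; exact hk'w⟩
        have h1 : k = c := hcu k ⟨hkm, hka, by rw [hkw, hfa]⟩
        have h2 : b = c := hcu b ⟨hbm, fun h => hab h.symm, by rw [hfb, hfa]⟩
        rw [h1, h2]
    refine my_keyA m f w hm hmax h4 ⟨_, hmam, le_of_lt hma⟩ hhigh ?_
    intro p hp hpm
    constructor
    · intro hwp
      by_contra hc
      push_neg at hc
      rcases lt_or_eq_of_le hc with hlt | heq
      · exact h6 p hp hpm ⟨a, ham, Or.inr ⟨by rw [hfa]; exact hlt, by rw [hfa]; exact hwp⟩⟩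
      · rcases hocc (p+1) hpm heq with h | h
        · have hodd : ¬ a % 2 = 0 := by omega
          rw [if_neg hodd] at hma
          have hpa : a - 1 = p := by omega
          rw [hpa] at hma
          exact absurd hma (not_lt.2 hwp.le)
        · have hodd : ¬ b % 2 = 0 := by omega
          rw [if_neg hodd] at hmb
          have hpb : b - 1 = p := by omega
          rw [hpb] at hmb
          exact absurd hmb (not_lt.2 hwp.le)
    · intro hwp1
      by_contra hc
      push_neg at hc
      rcases lt_or_eq_of_le hc with hlt | heq
      · exact h6 p hp hpm ⟨a, ham, Or.inl ⟨by rw [hfa]; exact hlt, by rw [hfa]; exact hwp1⟩⟩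
      · rcases hocc p (by omega) heq with h | h
        · have heven : a % 2 = 0 := by omega
          rw [if_pos heven] at hma
          have hpa : a + 1 = p + 1 := by omega
          rw [hpa] at hma
          exact absurd hma (not_lt.2 hwp1.le)
        · have heven : b % 2 = 0 := by omega
          rw [if_pos heven] at hmb
          have hpb : b + 1 = p + 1 := by omega
          rw [hpb] at hmb
          exact absurd hmb (not_lt.2 hwp1.le)
  · push_neg at hhigh
    obtain ⟨M, _, hMu⟩ := hmax
    have hA : a = M := hMu a ⟨ham, fun k hk => by rw [hfa]; exact hhigh k hk⟩
    have hB : b = M := hMu b ⟨hbm, fun k hk => by rw [hfb]; exact hhigh k hk⟩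
    exact hab (hA.trans hB.symm)

lemma my_main (m : ℕ) (x : ℕ → ℤ)
    (hm : m % 2 = 0)
    (hmin : ∃! i, i < m ∧ ∀ j < m, |x i| ≤ |x j|)
    (hmax : ∃! i, i < m ∧ ∀ j < m, |x j| ≤ |x i|)
    (h4 : ∀ i < m, (∃ j < m, |x j| < |x i|) → (∃ j < m, |x i| < |x j|) →
        ∃! j, j < m ∧ j ≠ i ∧ |x j| = |x i|)
    (h5 : ∀ i, i % 2 = 0 → i + 1 < m → x i ≤ x (i+1) ∧ 0 < x i * x (i+1))
    (h6 : ∀ i, i % 2 = 0 → i + 1 < m →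
        ¬ ∃ j < m, (|x i| < |x j| ∧ |x j| < |x (i+1)|) ∨
          (|x (i+1)| < |x j| ∧ |x j| < |x i|))
    (i j : ℕ) (hi : i < m) (hj : j < m) (hij : i ≠ j) (hpar : i % 2 = j % 2) :
    x i ≠ x j := by
  intro heq
  -- dual (negated) versions of the structural hypotheses
  have hmaxg : ∃! i, i < m ∧ ∀ j < m, -|x j| ≤ -|x i| := by
    obtain ⟨M, ⟨h1, h2⟩, h3⟩ := hmin
    refine ⟨M, ⟨h1, fun k hk => neg_le_neg (h2 k hk)⟩, ?_⟩
    rintro y ⟨hy1, hy2⟩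
    exact h3 y ⟨hy1, fun k hk => neg_le_neg_iff.1 (hy2 k hk)⟩
  have h4g : ∀ a < m, (∃ k < m, -|x k| < -|x a|) → (∃ k < m, -|x a| < -|x k|) →
      ∃! k, k < m ∧ k ≠ a ∧ -|x k| = -|x a| := by
    intro a ham hlo hhi
    obtain ⟨p, hp1, hp2⟩ := hlo
    obtain ⟨q, hq1, hq2⟩ := hhi
    obtain ⟨c, ⟨c1, c2, c3⟩, cu⟩ := h4 a ham ⟨q, hq1, neg_lt_neg_iff.1 hq2⟩
      ⟨p, hp1, neg_lt_neg_iff.1 hp2⟩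
    exact ⟨c, ⟨c1, c2, by rw [c3]⟩, fun y ⟨y1, y2, y3⟩ => cu y ⟨y1, y2, neg_inj.1 y3⟩⟩
  have h6g : ∀ p, p % 2 = 0 → p + 1 < m →
      ¬ ∃ k < m, (-|x p| < -|x k| ∧ -|x k| < -|x (p+1)|) ∨
        (-|x (p+1)| < -|x k| ∧ -|x k| < -|x p|) := by
    rintro p hp hpm ⟨k, hk, hd⟩
    refine h6 p hp hpm ⟨k, hk, ?_⟩
    rcases hd with ⟨u, v⟩ | ⟨u, v⟩
    · exact Or.inr ⟨neg_lt_neg_iff.1 v, neg_lt_neg_iff.1 u⟩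
    · exact Or.inl ⟨neg_lt_neg_iff.1 v, neg_lt_neg_iff.1 u⟩
  have habs : |x j| = |x i| := by rw [heq]
  -- |x i| is not the minimum value
  by_cases hminc : ∀ k < m, |x i| ≤ |x k|
  · obtain ⟨M, _, hMu⟩ := hmin
    exact hij ((hMu i ⟨hi, hminc⟩).trans
      (hMu j ⟨hj, by intro k hk; rw [habs]; exact hminc k hk⟩).symm)
  by_cases hmaxc : ∀ k < m, |x k| ≤ |x i|
  · obtain ⟨M, _, hMu⟩ := hmax
    exact hij ((hMu i ⟨hi, hmaxc⟩).trans
      (hMu j ⟨hj, by intro k hk; rw [habs]; exact hmaxc k hk⟩).symm)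
  push_neg at hminc hmaxc
  obtain ⟨pm, hpm1, hpm2⟩ := hminc
  obtain ⟨qm, hqm1, hqm2⟩ := hmaxc
  -- the only indices with |x k| = |x i| are i and j
  have hocc : ∀ k, k < m → |x k| = |x i| → k = i ∨ k = j := by
    intro k hk hkv
    by_cases h : k = i
    · exact Or.inl h
    · obtain ⟨c, _, cu⟩ := h4 i hi ⟨pm, hpm1, hpm2⟩ ⟨qm, hqm1, hqm2⟩
      exact Or.inr ((cu k ⟨hk, h, hkv⟩).trans (cu j ⟨hj, fun e => hij e.symm, habs⟩).symm)
  rcases Nat.mod_two_eq_zero_or_one i with hie | hio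
  · -- both even
    have hje : j % 2 = 0 := by omega
    have hi1 : i + 1 < m := by omega
    have hj1 : j + 1 < m := by omega
    rcases lt_trichotomy (x i) 0 with hneg | h0 | hpos
    · -- negative entries: partners sit strictly below
      have hfact : ∀ a, (a = i ∨ a = j) → x (a+1) < 0 ∧ |x (a+1)| < |x i| := by
        intro a ha
        have ham : a < m := by rcases ha with rfl | rfl; exacts [hi, hj]
        have hae : a % 2 = 0 := by rcases ha with rfl | rfl; exacts [hie, hje]
        have hxa : x a = x i := by rcases ha with rfl | rfl; exacts [rfl, heq.symm]
        have ha1 : a + 1 < m := by omega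
        obtain ⟨hle, hprod⟩ := h5 a hae ha1
        rw [hxa] at hle hprod
        have hn1 : x (a+1) < 0 := by nlinarith
        refine ⟨hn1, ?_⟩
        have hle' : |x (a+1)| ≤ |x i| := by
          rw [abs_of_neg hn1, abs_of_neg hneg]; linarith
        rcases lt_or_eq_of_le hle' with h | h
        · exact h
        · exfalso
          rcases hocc (a+1) ha1 h with h' | h' <;> omega
      have hcross : ∀ a b', (a = i ∨ a = j) → (b' = i ∨ b' = j) →
          ¬ (|x (b'+1)| < |x (a+1)|) := by
        intro a b' ha hb hlt
        have hbm : b' < m := by rcases hb with rfl | rfl; exacts [hi, hj]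
        have hbe : b' % 2 = 0 := by rcases hb with rfl | rfl; exacts [hie, hje]
        have hxb : |x b'| = |x i| := by rcases hb with rfl | rfl; exacts [rfl, habs]
        have hb1 : b' + 1 < m := by omega
        have ham : a < m := by rcases ha with rfl | rfl; exacts [hi, hj]
        refine h6 b' hbe hb1 ⟨a+1, by omega, Or.inr ⟨hlt, ?_⟩⟩
        rw [hxb]
        exact (hfact a ha).2
      have hw : |x (j+1)| = |x (i+1)| :=
        le_antisymm (not_lt.1 (hcross j i (Or.inr rfl) (Or.inl rfl)))
          (not_lt.1 (hcross i j (Or.inl rfl) (Or.inr rfl)))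
      refine my_key2 m (fun k => -|x k|) (-|x (i+1)|) (i+1) (j+1) hm hmaxg h4g h6g
        hi1 hj1 (by omega) rfl (by show -|x (j+1)| = -|x (i+1)|; rw [hw]) ?_ ?_
      · have h' : ¬ (i+1) % 2 = 0 := by omega
        show -|x (if (i+1) % 2 = 0 then i+1+1 else i+1-1)| < -|x (i+1)|
        rw [if_neg h']
        have e : i + 1 - 1 = i := by omega
        rw [e]
        exact neg_lt_neg (hfact i (Or.inl rfl)).2
      · have h' : ¬ (j+1) % 2 = 0 := by omega
        show -|x (if (j+1) % 2 = 0 then j+1+1 else j+1-1)| < -|x (i+1)|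
        rw [if_neg h']
        have e : j + 1 - 1 = j := by omega
        rw [e, habs, ← hw]
        exact neg_lt_neg (hfact j (Or.inr rfl)).2
    · obtain ⟨_, hprod⟩ := h5 i hie hi1
      rw [h0, zero_mul] at hprod
      exact lt_irrefl _ hprod
    · -- positive entries: partners sit strictly above
      have hfact : ∀ a, (a = i ∨ a = j) → 0 < x (a+1) ∧ |x i| < |x (a+1)| := by
        intro a ha
        have ham : a < m := by rcases ha with rfl | rfl; exacts [hi, hj]
        have hae : a % 2 = 0 := by rcases ha with rfl | rfl; exacts [hie, hje]
        have hxa : x a = x i := by rcases ha with rfl | rfl; exacts [rfl, heq.symm]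
        have ha1 : a + 1 < m := by omega
        obtain ⟨hle, hprod⟩ := h5 a hae ha1
        rw [hxa] at hle hprod
        have hp1 : 0 < x (a+1) := by nlinarith
        refine ⟨hp1, ?_⟩
        have hle' : |x i| ≤ |x (a+1)| := by
          rw [abs_of_pos hp1, abs_of_pos hpos]; linarith
        rcases lt_or_eq_of_le hle' with h | h
        · exact h
        · exfalso
          rcases hocc (a+1) ha1 h.symm with h' | h' <;> omega
      have hcross : ∀ a b', (a = i ∨ a = j) → (b' = i ∨ b' = j) →
          ¬ (|x (a+1)| < |x (b'+1)|) := by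
        intro a b' ha hb hlt
        have hbm : b' < m := by rcases hb with rfl | rfl; exacts [hi, hj]
        have hbe : b' % 2 = 0 := by rcases hb with rfl | rfl; exacts [hie, hje]
        have hxb : |x b'| = |x i| := by rcases hb with rfl | rfl; exacts [rfl, habs]
        have hb1 : b' + 1 < m := by omega
        have ham : a < m := by rcases ha with rfl | rfl; exacts [hi, hj]
        refine h6 b' hbe hb1 ⟨a+1, by omega, Or.inl ⟨?_, hlt⟩⟩
        rw [hxb]
        exact (hfact a ha).2
      have hw : |x (j+1)| = |x (i+1)| :=
        le_antisymm (not_lt.1 (hcross i j (Or.inl rfl) (Or.inr rfl)))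
          (not_lt.1 (hcross j i (Or.inr rfl) (Or.inl rfl)))
      refine my_key2 m (fun k => |x k|) (|x (i+1)|) (i+1) (j+1) hm hmax h4 h6
        hi1 hj1 (by omega) rfl hw ?_ ?_
      · have h' : ¬ (i+1) % 2 = 0 := by omega
        show |x (if (i+1) % 2 = 0 then i+1+1 else i+1-1)| < |x (i+1)|
        rw [if_neg h']
        have e : i + 1 - 1 = i := by omega
        rw [e]
        exact (hfact i (Or.inl rfl)).2
      · have h' : ¬ (j+1) % 2 = 0 := by omega
        show |x (if (j+1) % 2 = 0 then j+1+1 else j+1-1)| < |x (i+1)|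
        rw [if_neg h']
        have e : j + 1 - 1 = j := by omega
        rw [e, habs, ← hw]
        exact (hfact j (Or.inr rfl)).2
  · -- both odd
    have hjo : j % 2 = 1 := by omega
    have hi0 : 1 ≤ i := by omega
    have hj0 : 1 ≤ j := by omega
    have hfacts : ∀ a, (a = i ∨ a = j) →
        (x (a-1) ≤ x i ∧ 0 < x (a-1) * x i) := by
      intro a ha
      have ham : a < m := by rcases ha with rfl | rfl; exacts [hi, hj]
      have hao : a % 2 = 1 := by rcases ha with rfl | rfl; exacts [hio, hjo]
      have hxa : x a = x i := by rcases ha with rfl | rfl; exacts [rfl, heq.symm]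
      obtain ⟨hle, hprod⟩ := h5 (a-1) (by omega) (by omega)
      have e : a - 1 + 1 = a := by omega
      rw [e, hxa] at hle hprod
      exact ⟨hle, hprod⟩
    have h6' : ∀ b', (b' = i ∨ b' = j) →
        ¬ ∃ k < m, (|x (b'-1)| < |x k| ∧ |x k| < |x b'|) ∨
          (|x b'| < |x k| ∧ |x k| < |x (b'-1)|) := by
      intro b' hb
      have hbm : b' < m := by rcases hb with rfl | rfl; exacts [hi, hj]
      have hbo : b' % 2 = 1 := by rcases hb with rfl | rfl; exacts [hio, hjo]
      have h := h6 (b'-1) (by omega) (by omega)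
      have e : b' - 1 + 1 = b' := by omega
      rwa [e] at h
    rcases lt_trichotomy (x i) 0 with hneg | h0 | hpos
    · -- negative: the mates sit strictly above
      have hfact : ∀ a, (a = i ∨ a = j) → |x i| < |x (a-1)| := by
        intro a ha
        obtain ⟨hle, hprod⟩ := hfacts a ha
        have hao : a % 2 = 1 := by rcases ha with rfl | rfl; exacts [hio, hjo]
        have ham : a < m := by rcases ha with rfl | rfl; exacts [hi, hj]
        have hn1 : x (a-1) < 0 := by nlinarith
        have hle' : |x i| ≤ |x (a-1)| := by
          rw [abs_of_neg hn1, abs_of_neg hneg]; linarith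
        rcases lt_or_eq_of_le hle' with h | h
        · exact h
        · exfalso
          rcases hocc (a-1) (by omega) h.symm with h' | h' <;> omega
      have hcross : ∀ a b', (a = i ∨ a = j) → (b' = i ∨ b' = j) →
          ¬ (|x (a-1)| < |x (b'-1)|) := by
        intro a b' ha hb hlt
        have hxb : |x b'| = |x i| := by rcases hb with rfl | rfl; exacts [rfl, habs]
        have ham : a < m := by rcases ha with rfl | rfl; exacts [hi, hj]
        have hao : a % 2 = 1 := by rcases ha with rfl | rfl; exacts [hio, hjo]
        refine h6' b' hb ⟨a-1, by omega, Or.inr ⟨?_, hlt⟩⟩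
        rw [hxb]
        exact hfact a ha
      have hw : |x (j-1)| = |x (i-1)| :=
        le_antisymm (not_lt.1 (hcross i j (Or.inl rfl) (Or.inr rfl)))
          (not_lt.1 (hcross j i (Or.inr rfl) (Or.inl rfl)))
      refine my_key2 m (fun k => |x k|) (|x (i-1)|) (i-1) (j-1) hm hmax h4 h6
        (by omega) (by omega) (by omega) rfl hw ?_ ?_
      · have h' : (i-1) % 2 = 0 := by omega
        show |x (if (i-1) % 2 = 0 then i-1+1 else i-1-1)| < |x (i-1)|
        rw [if_pos h']
        have e : i - 1 + 1 = i := by omega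
        rw [e]
        exact hfact i (Or.inl rfl)
      · have h' : (j-1) % 2 = 0 := by omega
        show |x (if (j-1) % 2 = 0 then j-1+1 else j-1-1)| < |x (i-1)|
        rw [if_pos h']
        have e : j - 1 + 1 = j := by omega
        rw [e, habs, ← hw]
        exact hfact j (Or.inr rfl)
    · obtain ⟨_, hprod⟩ := hfacts i (Or.inl rfl)
      rw [h0, mul_zero] at hprod
      exact lt_irrefl _ hprod
    · -- positive: the mates sit strictly below
      have hfact : ∀ a, (a = i ∨ a = j) → |x (a-1)| < |x i| := by
        intro a ha
        obtain ⟨hle, hprod⟩ := hfacts a ha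
        have hao : a % 2 = 1 := by rcases ha with rfl | rfl; exacts [hio, hjo]
        have ham : a < m := by rcases ha with rfl | rfl; exacts [hi, hj]
        have hp1 : 0 < x (a-1) := by nlinarith
        have hle' : |x (a-1)| ≤ |x i| := by
          rw [abs_of_pos hp1, abs_of_pos hpos]; linarith
        rcases lt_or_eq_of_le hle' with h | h
        · exact h
        · exfalso
          rcases hocc (a-1) (by omega) h with h' | h' <;> omega
      have hcross : ∀ a b', (a = i ∨ a = j) → (b' = i ∨ b' = j) →
          ¬ (|x (b'-1)| < |x (a-1)|) := by
        intro a b' ha hb hlt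
        have hxb : |x b'| = |x i| := by rcases hb with rfl | rfl; exacts [rfl, habs]
        have ham : a < m := by rcases ha with rfl | rfl; exacts [hi, hj]
        have hao : a % 2 = 1 := by rcases ha with rfl | rfl; exacts [hio, hjo]
        refine h6' b' hb ⟨a-1, by omega, Or.inl ⟨hlt, ?_⟩⟩
        rw [hxb]
        exact hfact a ha
      have hw : |x (j-1)| = |x (i-1)| :=
        le_antisymm (not_lt.1 (hcross j i (Or.inr rfl) (Or.inl rfl)))
          (not_lt.1 (hcross i j (Or.inl rfl) (Or.inr rfl)))
      refine my_key2 m (fun k => -|x k|) (-|x (i-1)|) (i-1) (j-1) hm hmaxg h4g h6g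
        (by omega) (by omega) (by omega) rfl
        (by show -|x (j-1)| = -|x (i-1)|; rw [hw]) ?_ ?_
      · have h' : (i-1) % 2 = 0 := by omega
        show -|x (if (i-1) % 2 = 0 then i-1+1 else i-1-1)| < -|x (i-1)|
        rw [if_pos h']
        have e : i - 1 + 1 = i := by omega
        rw [e]
        exact neg_lt_neg (hfact i (Or.inl rfl))
      · have h' : (j-1) % 2 = 0 := by omega
        show -|x (if (j-1) % 2 = 0 then j-1+1 else j-1-1)| < -|x (i-1)|
        rw [if_pos h']
        have e : j - 1 + 1 = j := by omega
        rw [e, habs, ← hw]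
        exact neg_lt_neg (hfact j (Or.inr rfl))


theorem stmt1 (P : List ℤ) (hP : IsPointerList P) (i j : ℕ)
    (hi : i < P.length) (hj : j < P.length) (hij : i ≠ j)
    (hpar : i % 2 = j % 2) :
    P.getD i 0 ≠ P.getD j 0 := by
  obtain ⟨hm0, _, hmin, hmax, h4, h5, h6⟩ := hP
  exact my_main P.length (fun k => P.getD k 0) hm0 hmin hmax h4 h5 h6 i j hi hj hij hpar
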